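/- Let C be a unital C*-algebra, I a set, and A = (A_i)_{i∈I} a bounded family in C such that each A_i is normal. Then the spectrum of A in the C*-algebra of bounded functions I → C equals the closure of the union of the spectra Sp(A_i). -/

import Mathlib

set_option maxHeartbeats 1000000

open scoped ENNReal NNReal Topology
open Filter ENNReal spectrum CStarRing NormedSpace

section Aux

variable {C : Type*} [NormedRing C] [StarRing C] [CStarRing C]
    [NormedAlgebra ℂ C] [CompleteSpace C]
    {I : Type*} [TopologicalSpace I] [DiscreteTopology I]

/-- Evaluation at a point, as an algebra homomorphism on bounded continuous functions. -/
def BCFevalAlgHom (i : I) : BoundedContinuousFunction I C →ₐ[ℂ] C where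
  toFun f := f i
  map_one' := rfl
  map_mul' _ _ := rfl
  map_zero' := rfl
  map_add' _ _ := rfl
  commutes' _ := rfl

omit [CStarRing C] [CompleteSpace C] in
lemma isStarNormal_algebraMap_sub (r : ℂ) (a : C) [ha : IsStarNormal a] :
    IsStarNormal (algebraMap ℂ C r - a) := by
  have hc : ∀ (s : ℂ) (x : C), Commute (algebraMap ℂ C s) x := fun s x => Algebra.commutes s x
  have hs : ∀ x : C, Commute (star (algebraMap ℂ C r)) x := fun x => by
    simpa using (hc r (star x)).star_star
  constructor
  rw [star_sub]
  exact Commute.sub_left (hs _) (Commute.sub_right (hc r (star a)).symm ha.star_comm_self)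

private theorem IsSelfAdjoint.spectralRadius_eq_nnnorm' {a : C} (ha : IsSelfAdjoint a) :
    spectralRadius ℂ a = ‖a‖₊ := by
  have hconst : Tendsto (fun _n : ℕ => (‖a‖₊ : ℝ≥0∞)) atTop _ := tendsto_const_nhds
  refine tendsto_nhds_unique ?_ hconst
  convert
    (spectrum.pow_nnnorm_pow_one_div_tendsto_nhds_spectralRadius (a : C)).comp
      (tendsto_pow_atTop_atTop_of_one_lt (α := ℕ) one_lt_two) using 1
  refine funext fun n => ?_
  rw [Function.comp_apply, ha.nnnorm_pow_two_pow, ENNReal.coe_pow, ← rpow_natCast, ← rpow_mul]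
  simp

private theorem IsStarNormal.spectralRadius_eq_nnnorm' (a : C) [IsStarNormal a] :
    spectralRadius ℂ a = ‖a‖₊ := by
  refine (ENNReal.pow_right_strictMono two_ne_zero).injective ?_
  have heq :
    (fun n : ℕ => (‖(star a * a) ^ n‖₊ : ℝ≥0∞) ^ (1 / n : ℝ)) =
      (fun x => x ^ 2) ∘ fun n : ℕ => (‖a ^ n‖₊ : ℝ≥0∞) ^ (1 / n : ℝ) := by
    funext n
    rw [Function.comp_apply, ← rpow_natCast, ← rpow_mul, mul_comm, rpow_mul, rpow_natCast, ←
      coe_pow, sq, ← nnnorm_star_mul_self, Commute.mul_pow (star_comm_self' a), star_pow]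
  have h₂ :=
    ((ENNReal.continuous_pow 2).tendsto (spectralRadius ℂ a)).comp
      (spectrum.pow_nnnorm_pow_one_div_tendsto_nhds_spectralRadius a)
  rw [← heq] at h₂
  convert tendsto_nhds_unique h₂ (pow_nnnorm_pow_one_div_tendsto_nhds_spectralRadius (star a * a))
  rw [(IsSelfAdjoint.star_mul_self a).spectralRadius_eq_nnnorm', sq, nnnorm_star_mul_self, coe_mul]

lemma norm_inv_le_of_spectrum {u : Cˣ} [hn : IsStarNormal (u : C)] {ε : ℝ≥0} (hε : 0 < ε)
    (h : ∀ μ ∈ spectrum ℂ (u : C), ε ≤ ‖μ‖₊) : ‖(↑u⁻¹ : C)‖₊ ≤ ε⁻¹ := by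
  have hinv : IsStarNormal (↑u⁻¹ : C) := by
    constructor
    have h1 : Commute (star (u : C)) (u : C) := hn.star_comm_self
    have := ((h1.units_inv_right).units_inv_left (u := star u))
    simpa [Units.coe_star, Units.coe_star_inv] using this
  have hrad := IsStarNormal.spectralRadius_eq_nnnorm' (↑u⁻¹ : C)
  rw [← ENNReal.coe_le_coe, ← hrad, spectralRadius]
  refine iSup₂_le fun μ hμ => ?_
  rw [← spectrum.map_inv, Set.mem_inv] at hμ
  have hb := h _ hμ
  have hμ0 : μ ≠ 0 := by
    rintro rfl
    simp at hb
    exact absurd hb hε.ne'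
  rw [ENNReal.coe_le_coe]
  calc ‖μ‖₊ = ‖μ⁻¹‖₊⁻¹ := by rw [nnnorm_inv, inv_inv]
  _ ≤ ε⁻¹ := inv_anti₀ hε hb

end Aux

/-- Let `C` be a unital C*-algebra, `I` a set (a discrete space), and
`A = (A_i)_{i∈I}` a bounded family in `C` (an element of the C*-algebra of bounded
functions `I → C`) such that each `A_i` is normal.  Then the spectrum of `A` equals the
closure of the union of the spectra `Sp(A_i)`. -/
theorem spectrum_boundedContinuousFunction_eq_closure_iUnion_of_normal
    {C : Type*} [NormedRing C] [StarRing C] [CStarRing C]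
    [NormedAlgebra ℂ C] [CompleteSpace C]
    {I : Type*} [TopologicalSpace I] [DiscreteTopology I]
    (A : BoundedContinuousFunction I C)
    (hnormal : ∀ i : I, IsStarNormal (A i)) :
    spectrum ℂ A = closure (⋃ i : I, spectrum ℂ (A i)) := by
  refine le_antisymm ?_ (closure_minimal (Set.iUnion_subset fun i =>
    AlgHom.spectrum_apply_subset (BCFevalAlgHom i) A) (spectrum.isClosed A))
  intro z hz
  by_contra hzc
  -- find a ball around z avoiding the closure
  obtain ⟨ε, hε, hball⟩ := Metric.isOpen_iff.mp (isClosed_closure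
    (s := ⋃ i : I, spectrum ℂ (A i))).isOpen_compl z hzc
  set ε' : ℝ≥0 := ⟨ε, hε.le⟩ with hε'
  have hε'0 : 0 < ε' := hε
  -- each component is invertible
  have hzsp : ∀ i, z ∉ spectrum ℂ (A i) := by
    intro i hi
    exact hball (Metric.mem_ball_self hε) (subset_closure (Set.mem_iUnion.mpr ⟨i, hi⟩))
  have hu : ∀ i, IsUnit (algebraMap ℂ C z - A i) := fun i => spectrum.notMem_iff.mp (hzsp i)
  -- uniform bound on the inverses
  have hbound : ∀ i, ‖(↑(hu i).unit⁻¹ : C)‖₊ ≤ ε'⁻¹ := by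
    intro i
    haveI := hnormal i
    haveI : IsStarNormal ((hu i).unit : C) := by
      rw [IsUnit.unit_spec]
      exact isStarNormal_algebraMap_sub z (A i)
    refine norm_inv_le_of_spectrum hε'0 fun μ hμ => ?_
    rw [IsUnit.unit_spec, ← spectrum.singleton_sub_eq] at hμ
    obtain ⟨w, hw, ν, hν, rfl⟩ := hμ
    rw [Set.mem_singleton_iff] at hw
    rw [hw]
    have hν' : ν ∉ Metric.ball z ε := fun hb =>
      hball hb (subset_closure (Set.mem_iUnion.mpr ⟨_, hν⟩))
    rw [Metric.mem_ball, dist_comm] at hν'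
    push_neg at hν'
    rw [← NNReal.coe_le_coe, coe_nnnorm]
    exact (by simpa [dist_eq_norm] using hν' : ε ≤ ‖z - ν‖)
  -- construct the inverse bounded function
  set g : I → C := fun i => (↑(hu i).unit⁻¹ : C) with hg
  have hgn : ∀ i, ‖g i‖ ≤ (ε'⁻¹ : ℝ≥0) := fun i => hbound i
  have hcont : Continuous g := continuous_of_discreteTopology
  set G : BoundedContinuousFunction I C :=
    ⟨⟨g, hcont⟩, ⟨2 * (ε'⁻¹ : ℝ≥0), fun i j => by
      calc dist (g i) (g j) ≤ ‖g i‖ + ‖g j‖ := dist_le_norm_add_norm _ _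
      _ ≤ (ε'⁻¹ : ℝ≥0) + (ε'⁻¹ : ℝ≥0) := add_le_add (hgn i) (hgn j)
      _ = 2 * (ε'⁻¹ : ℝ≥0) := by ring⟩⟩ with hG
  -- show z is not in the spectrum
  have hunit : IsUnit (algebraMap ℂ (BoundedContinuousFunction I C) z - A) := by
    refine ⟨⟨algebraMap ℂ (BoundedContinuousFunction I C) z - A, G, ?_, ?_⟩, rfl⟩
    · ext i
      show (algebraMap ℂ C z - A i) * g i = 1
      rw [hg, ← IsUnit.unit_spec (hu i)]
      exact Units.mul_inv _
    · ext i
      show g i * (algebraMap ℂ C z - A i) = 1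
      rw [hg, ← IsUnit.unit_spec (hu i)]
      exact Units.inv_mul _
  exact spectrum.notMem_iff.mpr hunit hz
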